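/- Let u, v be independent uniform random points in the unit disc U ⊂ ℝ². Then the distance from the origin to the segment [u, v] is a random variable whose distribution function F satisfies F(ε) ≤ Cε for all ε > 0 and some absolute constant C; i.e., P(dist(0, [u,v]) ≤ ε) ≤ Cε. -/

import Mathlib

open MeasureTheory Metric
open scoped ENNReal


theorem slab_line (c b a : ℝ) (hc : c ≠ 0) (ha : 0 ≤ a) :
    volume {y : ℝ | |c * y - b| ≤ a} = ENNReal.ofReal (2 * a / |c|) := by
  rcases hc.lt_or_gt with h | h
  · have : {y : ℝ | |c * y - b| ≤ a} = Set.Icc ((b + a)/c) ((b - a)/c) := by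
      ext y
      simp only [Set.mem_setOf_eq, Set.mem_Icc, abs_le]
      rw [div_le_iff_of_neg h, le_div_iff_of_neg h]
      constructor <;> intro ⟨h1, h2⟩ <;> constructor <;> linarith
    rw [this, Real.volume_Icc, abs_of_neg h]
    congr 1
    field_simp [hc]
    ring
  · have : {y : ℝ | |c * y - b| ≤ a} = Set.Icc ((b - a)/c) ((b + a)/c) := by
      ext y
      simp only [Set.mem_setOf_eq, Set.mem_Icc, abs_le]
      rw [div_le_iff₀ h, le_div_iff₀ h]
      constructor <;> intro ⟨h1, h2⟩ <;> constructor <;> linarith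
    rw [this, Real.volume_Icc, abs_of_pos h]
    congr 1
    field_simp [hc]
    ring

theorem slabRR (c d a : ℝ) (hc : c ≠ 0) (ha : 0 ≤ a) :
    volume {p : ℝ × ℝ | |p.1| ≤ 1 ∧ |c * p.2 - d * p.1| ≤ a} ≤ ENNReal.ofReal (4 * a / |c|) := by
  have hS : MeasurableSet {p : ℝ × ℝ | |p.1| ≤ 1 ∧ |c * p.2 - d * p.1| ≤ a} := by
    apply MeasurableSet.inter
    · exact measurableSet_le measurable_fst.abs measurable_const
    · exact measurableSet_le ((measurable_const.mul measurable_snd).sub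
        (measurable_const.mul measurable_fst)).abs measurable_const
  rw [Measure.volume_eq_prod, Measure.prod_apply hS]
  have hbd : ∀ x : ℝ, volume (Prod.mk x ⁻¹' {p : ℝ × ℝ | |p.1| ≤ 1 ∧ |c * p.2 - d * p.1| ≤ a})
      ≤ Set.indicator (Set.Icc (-1:ℝ) 1) (fun _ => ENNReal.ofReal (2 * a / |c|)) x := by
    intro x
    by_cases hx : x ∈ Set.Icc (-1:ℝ) 1
    · rw [Set.indicator_of_mem hx]
      refine le_trans (measure_mono ?_) (le_of_eq (slab_line c (d*x) a hc ha))
      intro y hy; exact hy.2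
    · rw [Set.indicator_of_notMem hx]
      have he : Prod.mk x ⁻¹' {p : ℝ × ℝ | |p.1| ≤ 1 ∧ |c * p.2 - d * p.1| ≤ a} = ∅ := by
        ext y
        simp only [Set.mem_preimage, Set.mem_setOf_eq, Set.mem_empty_iff_false, iff_false, not_and]
        intro h1 _
        exact hx (Set.mem_Icc.mpr (abs_le.mp h1))
      rw [he, measure_empty]
  calc ∫⁻ x, volume (Prod.mk x ⁻¹' {p : ℝ × ℝ | |p.1| ≤ 1 ∧ |c * p.2 - d * p.1| ≤ a})
      ≤ ∫⁻ x, Set.indicator (Set.Icc (-1:ℝ) 1) (fun _ => ENNReal.ofReal (2 * a / |c|)) x :=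
        lintegral_mono hbd
    _ = ENNReal.ofReal (2 * a / |c|) * volume (Set.Icc (-1:ℝ) 1) := by
        rw [lintegral_indicator_const measurableSet_Icc]
    _ ≤ ENNReal.ofReal (4 * a / |c|) := by
        rw [Real.volume_Icc]
        have h2 : (1 : ℝ) - -1 = 2 := by norm_num
        rw [h2, ← ENNReal.ofReal_mul (by positivity)]
        apply le_of_eq
        congr 1
        ring


theorem detbd (x w : EuclideanSpace ℝ (Fin 2)) :
    |x 0 * w 1 - x 1 * w 0| ≤ ‖x‖ * ‖w‖ := by
  have hx : ‖x‖ = Real.sqrt (x 0 ^ 2 + x 1 ^ 2) := by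
    rw [EuclideanSpace.norm_eq]; simp [Fin.sum_univ_two, sq_abs]
  have hw : ‖w‖ = Real.sqrt (w 0 ^ 2 + w 1 ^ 2) := by
    rw [EuclideanSpace.norm_eq]; simp [Fin.sum_univ_two, sq_abs]
  rw [hx, hw, ← Real.sqrt_mul (by positivity), abs_le]
  constructor <;> nlinarith [Real.sq_sqrt (show (0:ℝ) ≤ (x 0 ^ 2 + x 1 ^ 2) * (w 0 ^ 2 + w 1 ^ 2) by positivity), Real.sqrt_nonneg ((x 0 ^ 2 + x 1 ^ 2) * (w 0 ^ 2 + w 1 ^ 2)), sq_nonneg (x 0 * w 0 + x 1 * w 1), sq_nonneg (x 0 * w 1 - x 1 * w 0)]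

theorem stmt9_det_of_infDist (u v : EuclideanSpace ℝ (Fin 2)) (hu : ‖u‖ ≤ 1) (hv : ‖v‖ ≤ 1)
    (ε : ℝ) (h : Metric.infDist 0 (segment ℝ u v) ≤ ε) :
    |u 0 * v 1 - u 1 * v 0| ≤ 2 * ε := by
  have hne : (segment ℝ u v).Nonempty := ⟨u, left_mem_segment ℝ u v⟩
  -- for all δ > 0, bound by 2*(ε+δ)
  have key : ∀ δ : ℝ, 0 < δ → |u 0 * v 1 - u 1 * v 0| ≤ 2 * (ε + δ) := by
    intro δ hδ
    have h2 : Metric.infDist 0 (segment ℝ u v) < ε + δ := lt_of_le_of_lt h (by linarith)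
    obtain ⟨x, hxs, hxd⟩ := (Metric.infDist_lt_iff hne).mp h2
    obtain ⟨a, b, ha, hb, hab, hx⟩ := hxs
    have hdet : u 0 * v 1 - u 1 * v 0 = x 0 * (v - u) 1 - x 1 * (v - u) 0 := by
      have h0 : x 0 = a * u 0 + b * v 0 := by rw [← hx]; simp
      have h1 : x 1 = a * u 1 + b * v 1 := by rw [← hx]; simp
      have hs0 : (v - u) 0 = v 0 - u 0 := by simp
      have hs1 : (v - u) 1 = v 1 - u 1 := by simp
      rw [h0, h1, hs0, hs1]; linear_combination (u 1 * v 0 - u 0 * v 1) * hab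
    rw [hdet]
    calc |x 0 * (v - u) 1 - x 1 * (v - u) 0| ≤ ‖x‖ * ‖v - u‖ := detbd x (v - u)
      _ ≤ (ε + δ) * 2 := by
          apply mul_le_mul _ _ (norm_nonneg _) (by linarith [dist_nonneg.trans hxd.le])
          · have := hxd.le; rwa [dist_comm, dist_zero_right] at this
          · calc ‖v - u‖ ≤ ‖v‖ + ‖u‖ := norm_sub_le _ _
              _ ≤ 2 := by linarith
      _ = 2 * (ε + δ) := by ring
  by_contra hc
  push_neg at hc
  have := key ((|u 0 * v 1 - u 1 * v 0| - 2 * ε) / 4) (by linarith)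
  linarith



theorem coord_le_norm (v : EuclideanSpace ℝ (Fin 2)) (i : Fin 2) : |v i| ≤ ‖v‖ := by
  rw [EuclideanSpace.norm_eq, ← Real.sqrt_sq_eq_abs]
  apply Real.sqrt_le_sqrt
  rw [Fin.sum_univ_two]
  fin_cases i <;> simp [sq_abs] <;> positivity

theorem swapRR (c d a : ℝ) (hc : c ≠ 0) (ha : 0 ≤ a) :
    volume {p : ℝ × ℝ | |p.2| ≤ 1 ∧ |c * p.1 - d * p.2| ≤ a} ≤ ENNReal.ofReal (4 * a / |c|) := by
  have hmp : MeasurePreserving (Prod.swap : ℝ × ℝ → ℝ × ℝ) volume volume := by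
    rw [Measure.volume_eq_prod]; exact Measure.measurePreserving_swap
  have hS : MeasurableSet {p : ℝ × ℝ | |p.1| ≤ 1 ∧ |c * p.2 - d * p.1| ≤ a} :=
    MeasurableSet.inter (measurableSet_le measurable_fst.abs measurable_const)
      (measurableSet_le ((measurable_const.mul measurable_snd).sub
        (measurable_const.mul measurable_fst)).abs measurable_const)
  have : {p : ℝ × ℝ | |p.2| ≤ 1 ∧ |c * p.1 - d * p.2| ≤ a} =
      Prod.swap ⁻¹' {p : ℝ × ℝ | |p.1| ≤ 1 ∧ |c * p.2 - d * p.1| ≤ a} := rfl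
  rw [this, hmp.measure_preimage hS.nullMeasurableSet]
  exact slabRR c d a hc ha

theorem slabE (u : EuclideanSpace ℝ (Fin 2)) (a : ℝ) (ha : 0 < a) :
    volume {v : EuclideanSpace ℝ (Fin 2) | ‖v‖ ≤ 1 ∧ |u 0 * v 1 - u 1 * v 0| ≤ a}
      ≤ ENNReal.ofReal (8 * a) / ENNReal.ofReal ‖u‖ := by
  by_cases hu : u = 0
  · subst hu
    rw [norm_zero, ENNReal.ofReal_zero, ENNReal.div_zero (by simp [ha, ha.le] : ENNReal.ofReal (8*a) ≠ 0)]
    exact le_top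
  · -- ‖u‖ > 0
    have hun : 0 < ‖u‖ := norm_pos_iff.mpr hu
    rw [← ENNReal.ofReal_div_of_pos hun]
    have hmp : MeasurePreserving
        (fun v : EuclideanSpace ℝ (Fin 2) => (v 0, v 1)) volume volume :=
      (volume_preserving_finTwoArrow ℝ).comp
        (EuclideanSpace.volume_preserving_symm_measurableEquiv_toLp (Fin 2))
    -- norm vs max coordinate
    have hnorm : ‖u‖ ≤ 2 * max |u 0| |u 1| := by
      have h0 : ‖u‖ = Real.sqrt (u 0 ^ 2 + u 1 ^ 2) := by
        rw [EuclideanSpace.norm_eq]; simp [Fin.sum_univ_two, sq_abs]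
      rw [h0]
      have h1 : u 0 ^ 2 + u 1 ^ 2 ≤ (2 * max |u 0| |u 1|) ^ 2 := by
        have ha0 := pow_le_pow_left₀ (abs_nonneg (u 0)) (le_max_left |u 0| |u 1|) 2
        have ha1 := pow_le_pow_left₀ (abs_nonneg (u 1)) (le_max_right |u 0| |u 1|) 2
        nlinarith [sq_abs (u 0), sq_abs (u 1), sq_nonneg (max |u 0| |u 1|)]
      calc Real.sqrt (u 0 ^ 2 + u 1 ^ 2) ≤ Real.sqrt ((2 * max |u 0| |u 1|) ^ 2) :=
            Real.sqrt_le_sqrt h1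
        _ = 2 * max |u 0| |u 1| := Real.sqrt_sq (by positivity)
    rcases le_total |u 1| |u 0| with hcase | hcase
    · -- use c = u 0
      have hc : u 0 ≠ 0 := by
        intro h
        apply hu
        have h1 : u 1 = 0 := by rw [h] at hcase; simpa using hcase
        ext i; fin_cases i <;> simp [h, h1]
      have hsub : {v : EuclideanSpace ℝ (Fin 2) | ‖v‖ ≤ 1 ∧ |u 0 * v 1 - u 1 * v 0| ≤ a} ⊆
          (fun v : EuclideanSpace ℝ (Fin 2) => (v 0, v 1)) ⁻¹'
            {p : ℝ × ℝ | |p.1| ≤ 1 ∧ |u 0 * p.2 - u 1 * p.1| ≤ a} := by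
        intro v ⟨h1, h2⟩
        exact ⟨(coord_le_norm v 0).trans h1, h2⟩
      have hT : MeasurableSet {p : ℝ × ℝ | |p.1| ≤ 1 ∧ |u 0 * p.2 - u 1 * p.1| ≤ a} :=
        MeasurableSet.inter (measurableSet_le measurable_fst.abs measurable_const)
          (measurableSet_le ((measurable_const.mul measurable_snd).sub
            (measurable_const.mul measurable_fst)).abs measurable_const)
      calc volume {v : EuclideanSpace ℝ (Fin 2) | ‖v‖ ≤ 1 ∧ |u 0 * v 1 - u 1 * v 0| ≤ a}
          ≤ volume ((fun v : EuclideanSpace ℝ (Fin 2) => (v 0, v 1)) ⁻¹'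
            {p : ℝ × ℝ | |p.1| ≤ 1 ∧ |u 0 * p.2 - u 1 * p.1| ≤ a}) := measure_mono hsub
        _ = volume {p : ℝ × ℝ | |p.1| ≤ 1 ∧ |u 0 * p.2 - u 1 * p.1| ≤ a} :=
            hmp.measure_preimage hT.nullMeasurableSet
        _ ≤ ENNReal.ofReal (4 * a / |u 0|) := slabRR (u 0) (u 1) a hc ha.le
        _ ≤ ENNReal.ofReal (8 * a / ‖u‖) := by
            apply ENNReal.ofReal_le_ofReal
            rw [div_le_div_iff₀ (abs_pos.mpr hc) hun]
            have : max |u 0| |u 1| = |u 0| := max_eq_left hcase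
            nlinarith [hnorm, abs_pos.mpr hc, ha]
    · -- use c = u 1, swapped
      have hc : u 1 ≠ 0 := by
        intro h
        apply hu
        have h1 : u 0 = 0 := by rw [h] at hcase; simpa using hcase
        ext i; fin_cases i <;> simp [h, h1]
      have hsub : {v : EuclideanSpace ℝ (Fin 2) | ‖v‖ ≤ 1 ∧ |u 0 * v 1 - u 1 * v 0| ≤ a} ⊆
          (fun v : EuclideanSpace ℝ (Fin 2) => (v 0, v 1)) ⁻¹'
            {p : ℝ × ℝ | |p.2| ≤ 1 ∧ |u 1 * p.1 - u 0 * p.2| ≤ a} := by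
        intro v ⟨h1, h2⟩
        refine ⟨(coord_le_norm v 1).trans h1, ?_⟩
        rw [show u 1 * v 0 - u 0 * v 1 = -(u 0 * v 1 - u 1 * v 0) by ring, abs_neg]
        exact h2
      have hT : MeasurableSet {p : ℝ × ℝ | |p.2| ≤ 1 ∧ |u 1 * p.1 - u 0 * p.2| ≤ a} :=
        MeasurableSet.inter (measurableSet_le measurable_snd.abs measurable_const)
          (measurableSet_le ((measurable_const.mul measurable_fst).sub
            (measurable_const.mul measurable_snd)).abs measurable_const)
      calc volume {v : EuclideanSpace ℝ (Fin 2) | ‖v‖ ≤ 1 ∧ |u 0 * v 1 - u 1 * v 0| ≤ a}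
          ≤ volume ((fun v : EuclideanSpace ℝ (Fin 2) => (v 0, v 1)) ⁻¹'
            {p : ℝ × ℝ | |p.2| ≤ 1 ∧ |u 1 * p.1 - u 0 * p.2| ≤ a}) := measure_mono hsub
        _ = volume {p : ℝ × ℝ | |p.2| ≤ 1 ∧ |u 1 * p.1 - u 0 * p.2| ≤ a} :=
            hmp.measure_preimage hT.nullMeasurableSet
        _ ≤ ENNReal.ofReal (4 * a / |u 1|) := swapRR (u 1) (u 0) a hc ha.le
        _ ≤ ENNReal.ofReal (8 * a / ‖u‖) := by
            apply ENNReal.ofReal_le_ofReal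
            rw [div_le_div_iff₀ (abs_pos.mpr hc) hun]
            have : max |u 0| |u 1| = |u 1| := max_eq_right hcase
            nlinarith [hnorm, abs_pos.mpr hc, ha]


theorem lint_inv_norm_le :
    ∫⁻ u in closedBall (0 : EuclideanSpace ℝ (Fin 2)) 1, (ENNReal.ofReal ‖u‖)⁻¹ ∂volume
      ≤ ENNReal.ofReal (4 * Real.pi) := by
  set E := EuclideanSpace ℝ (Fin 2)
  set A : ℕ → Set E := fun k => {u : E | (1/2:ℝ)^(k+1) < ‖u‖ ∧ ‖u‖ ≤ (1/2)^k} with hA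
  have hcover : closedBall (0 : E) 1 ⊆ {0} ∪ ⋃ k : ℕ, A k := by
    intro u hu
    rcases eq_or_ne u 0 with h | h
    · exact Or.inl h
    · right
      have hpos : 0 < ‖u‖ := norm_pos_iff.mpr h
      have hex : ∃ n : ℕ, (1/2:ℝ)^(n+1) < ‖u‖ := by
        obtain ⟨n, hn⟩ := exists_pow_lt_of_lt_one hpos (by norm_num : (1/2:ℝ) < 1)
        exact ⟨n, lt_of_le_of_lt (pow_le_pow_of_le_one (by norm_num) (by norm_num) (Nat.le_succ n)) hn⟩
      set k := Nat.find hex with hk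
      refine Set.mem_iUnion.mpr ⟨k, Nat.find_spec hex, ?_⟩
      rcases Nat.eq_zero_or_pos k with h0 | h0
      · rw [h0, pow_zero]
        simpa [dist_zero_right] using hu
      · obtain ⟨j, hj⟩ := Nat.exists_eq_succ_of_ne_zero h0.ne'
        have := Nat.find_min hex (m := j) (by omega)
        push_neg at this
        rw [hj]
        simpa using this
  have hball : ∀ k : ℕ, volume (A k) ≤ ENNReal.ofReal (((1/2:ℝ)^k)^2 * Real.pi) := by
    intro k
    have hsub : A k ⊆ closedBall (0 : E) ((1/2)^k) := by
      intro u hu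
      simpa [dist_zero_right] using hu.2
    refine (measure_mono hsub).trans ?_
    rw [EuclideanSpace.volume_closedBall]
    norm_num [Real.Gamma_two, Real.sq_sqrt Real.pi_pos.le]
    apply le_of_eq; rw [ENNReal.ofReal_mul (by positivity), ENNReal.ofReal_pow (by positivity) 2, ENNReal.ofReal_pow (by norm_num)]
  have hstep : ∀ k : ℕ, ∫⁻ u in A k, (ENNReal.ofReal ‖u‖)⁻¹ ∂volume
      ≤ ENNReal.ofReal (2 * Real.pi) * (2⁻¹ : ℝ≥0∞)^k := by
    intro k
    have hc : ∀ u ∈ A k, (ENNReal.ofReal ‖u‖)⁻¹ ≤ ENNReal.ofReal ((2:ℝ)^(k+1)) := by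
      intro u hu
      have h1 : (1/2:ℝ)^(k+1) ≤ ‖u‖ := hu.1.le
      have h2 : (0:ℝ) < (1/2:ℝ)^(k+1) := by positivity
      calc (ENNReal.ofReal ‖u‖)⁻¹ ≤ (ENNReal.ofReal ((1/2:ℝ)^(k+1)))⁻¹ :=
            ENNReal.inv_le_inv' (ENNReal.ofReal_le_ofReal h1)
        _ = ENNReal.ofReal (((1/2:ℝ)^(k+1))⁻¹) := (ENNReal.ofReal_inv_of_pos h2).symm
        _ = ENNReal.ofReal ((2:ℝ)^(k+1)) := by rw [one_div, inv_pow, inv_inv]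
    calc ∫⁻ u in A k, (ENNReal.ofReal ‖u‖)⁻¹ ∂volume
        ≤ ∫⁻ _ in A k, ENNReal.ofReal ((2:ℝ)^(k+1)) ∂volume :=
          setLIntegral_mono measurable_const hc
      _ = ENNReal.ofReal ((2:ℝ)^(k+1)) * volume (A k) := setLIntegral_const _ _
      _ ≤ ENNReal.ofReal ((2:ℝ)^(k+1)) * ENNReal.ofReal (((1/2:ℝ)^k)^2 * Real.pi) := by
          exact mul_le_mul_right (hball k) _
      _ = ENNReal.ofReal (2 * Real.pi) * (2⁻¹ : ℝ≥0∞)^k := by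
          rw [← ENNReal.ofReal_mul (by positivity)]
          rw [show (2⁻¹ : ℝ≥0∞) = ENNReal.ofReal (1/2 : ℝ) by
            rw [one_div, ENNReal.ofReal_inv_of_pos (by norm_num)]; norm_num]
          rw [← ENNReal.ofReal_pow (by positivity), ← ENNReal.ofReal_mul (by positivity)]
          congr 1
          have h2k : (2:ℝ)^k ≠ 0 := by positivity
          field_simp
          rw [pow_succ, mul_right_comm, ← mul_pow]; norm_num
  calc ∫⁻ u in closedBall (0 : E) 1, (ENNReal.ofReal ‖u‖)⁻¹ ∂volume
      ≤ ∫⁻ u in {(0:E)} ∪ ⋃ k : ℕ, A k, (ENNReal.ofReal ‖u‖)⁻¹ ∂volume :=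
        lintegral_mono_set hcover
    _ ≤ (∫⁻ u in {(0:E)}, (ENNReal.ofReal ‖u‖)⁻¹ ∂volume)
        + ∫⁻ u in ⋃ k : ℕ, A k, (ENNReal.ofReal ‖u‖)⁻¹ ∂volume := lintegral_union_le _ _ _
    _ ≤ 0 + ∑' k : ℕ, ∫⁻ u in A k, (ENNReal.ofReal ‖u‖)⁻¹ ∂volume := by
        gcongr
        · rw [show volume.restrict {(0:E)} = 0 by
            rw [Measure.restrict_eq_zero]; exact measure_singleton 0]
          simp
        · exact lintegral_iUnion_le _ _
    _ ≤ 0 + ∑' k : ℕ, ENNReal.ofReal (2 * Real.pi) * (2⁻¹ : ℝ≥0∞)^k := by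
        gcongr with k
        exact hstep k
    _ = ENNReal.ofReal (4 * Real.pi) := by
        rw [zero_add, ENNReal.tsum_mul_left, ENNReal.tsum_geometric]
        rw [ENNReal.one_sub_inv_two, inv_inv,
          show (2:ℝ≥0∞) = ENNReal.ofReal 2 by simp,
          ← ENNReal.ofReal_mul (by positivity)]
        congr 1
        ring


open MeasureTheory in
/-- For `u, v` independent uniform points in the unit disc, the distance from the
origin to the segment `[u,v]` satisfies `P(dist ≤ ε) ≤ C ε`. -/
theorem stmt9 : ∃ C : ℝ, 0 < C ∧ ∀ ε : ℝ, 0 < ε →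
    (((volume (Metric.closedBall (0 : EuclideanSpace ℝ (Fin 2)) 1))⁻¹ •
        volume.restrict (Metric.closedBall (0 : EuclideanSpace ℝ (Fin 2)) 1)).prod
      ((volume (Metric.closedBall (0 : EuclideanSpace ℝ (Fin 2)) 1))⁻¹ •
        volume.restrict (Metric.closedBall (0 : EuclideanSpace ℝ (Fin 2)) 1)))
      {p : EuclideanSpace ℝ (Fin 2) × EuclideanSpace ℝ (Fin 2) |
        Metric.infDist 0 (segment ℝ p.1 p.2) ≤ ε} ≤ ENNReal.ofReal (C * ε) := by
  refine ⟨64, by norm_num, fun ε hε => ?_⟩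
  set E := EuclideanSpace ℝ (Fin 2)
  set B := Metric.closedBall (0 : E) 1 with hB
  have hπ : volume B = ENNReal.ofReal Real.pi := by
    rw [hB, EuclideanSpace.volume_closedBall]
    norm_num [Real.Gamma_two, Real.sq_sqrt Real.pi_pos.le]
  have hπ0 : ENNReal.ofReal Real.pi ≠ 0 := by
    simp [Real.pi_pos, Real.pi_pos.le, Real.pi_ne_zero]
  have hπtop : ENNReal.ofReal Real.pi ≠ ⊤ := ENNReal.ofReal_ne_top
  set μ : Measure E := (volume B)⁻¹ • volume.restrict B with hμ
  -- coordinate maps measurable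
  have hcoord : ∀ i : Fin 2, Measurable (fun v : E => v i) := fun i =>
    (EuclideanSpace.proj i).continuous.measurable
  set T : Set (E × E) :=
    {p : E × E | |p.1 0 * p.2 1 - p.1 1 * p.2 0| ≤ 2 * ε} with hT
  have hTmeas : MeasurableSet T := by
    apply measurableSet_le _ measurable_const
    exact (((hcoord 0).comp measurable_fst).mul ((hcoord 1).comp measurable_snd)).sub
      (((hcoord 1).comp measurable_fst).mul ((hcoord 0).comp measurable_snd)) |>.abs
  have hμB : μ Bᶜ = 0 := by
    rw [hμ, Measure.smul_apply, Measure.restrict_apply (measurableSet_closedBall.compl)]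
    simp [hB]
  have hμuniv : μ Set.univ = 1 := by
    rw [hμ, Measure.smul_apply, Measure.restrict_apply MeasurableSet.univ, Set.univ_inter,
      hπ, smul_eq_mul, ENNReal.inv_mul_cancel hπ0 hπtop]
  -- step 1: inclusion
  have hsub : {p : E × E | Metric.infDist 0 (segment ℝ p.1 p.2) ≤ ε} ⊆ T ∪ (B ×ˢ B)ᶜ := by
    intro p hp
    by_cases hpB : p ∈ B ×ˢ B
    · left
      obtain ⟨h1, h2⟩ := hpB
      rw [hB, Metric.mem_closedBall, dist_zero_right] at h1 h2
      exact stmt9_det_of_infDist p.1 p.2 h1 h2 ε hp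
    · exact Or.inr hpB
  have hnull : (μ.prod μ) ((B ×ˢ B)ᶜ) = 0 := by
    rw [Set.compl_prod_eq_union]
    refine measure_union_null ?_ ?_
    · rw [Measure.prod_prod]
      simp [hμB]
    · rw [Measure.prod_prod]
      simp [hμB]
  -- step 2: product formula
  have hprod : (μ.prod μ) T = ∫⁻ u, μ {v : E | |u 0 * v 1 - u 1 * v 0| ≤ 2 * ε} ∂μ := by
    rw [Measure.prod_apply hTmeas]
    rfl
  -- step 3: inner bound
  have hinner : ∀ u : E, μ {v : E | |u 0 * v 1 - u 1 * v 0| ≤ 2 * ε}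
      ≤ (ENNReal.ofReal Real.pi)⁻¹ * (ENNReal.ofReal (16 * ε) / ENNReal.ofReal ‖u‖) := by
    intro u
    have hmeas : MeasurableSet {v : E | |u 0 * v 1 - u 1 * v 0| ≤ 2 * ε} := by
      apply measurableSet_le _ measurable_const
      exact ((measurable_const.mul (hcoord 1)).sub (measurable_const.mul (hcoord 0))).abs
    rw [hμ, Measure.smul_apply, Measure.restrict_apply hmeas, hπ, smul_eq_mul]
    apply mul_le_mul_right
    have heq : {v : E | |u 0 * v 1 - u 1 * v 0| ≤ 2 * ε} ∩ B
        = {v : E | ‖v‖ ≤ 1 ∧ |u 0 * v 1 - u 1 * v 0| ≤ 2 * ε} := by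
      ext v
      simp only [Set.mem_inter_iff, Set.mem_setOf_eq, hB, Metric.mem_closedBall,
        dist_zero_right]
      tauto
    rw [heq]
    have := slabE u (2 * ε) (by linarith)
    convert this using 2
    ring
  -- step 4: integrate
  have hint : ∫⁻ u, (ENNReal.ofReal Real.pi)⁻¹ * (ENNReal.ofReal (16 * ε) / ENNReal.ofReal ‖u‖) ∂μ
      ≤ (ENNReal.ofReal Real.pi)⁻¹ * ENNReal.ofReal (16 * ε) *
        ((ENNReal.ofReal Real.pi)⁻¹ * ENNReal.ofReal (4 * Real.pi)) := by
    have hrw : ∀ u : E, (ENNReal.ofReal Real.pi)⁻¹ * (ENNReal.ofReal (16 * ε) / ENNReal.ofReal ‖u‖)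
        = ((ENNReal.ofReal Real.pi)⁻¹ * ENNReal.ofReal (16 * ε)) * (ENNReal.ofReal ‖u‖)⁻¹ := by
      intro u
      rw [div_eq_mul_inv, mul_assoc]
    simp_rw [hrw]
    rw [lintegral_const_mul' _ _ (by
      apply ENNReal.mul_ne_top (ENNReal.inv_ne_top.mpr hπ0) ENNReal.ofReal_ne_top)]
    apply mul_le_mul_right
    rw [hμ, lintegral_smul_measure, hπ]
    exact mul_le_mul_right lint_inv_norm_le _
  -- assemble
  calc (μ.prod μ) {p : E × E | Metric.infDist 0 (segment ℝ p.1 p.2) ≤ ε}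
      ≤ (μ.prod μ) (T ∪ (B ×ˢ B)ᶜ) := measure_mono hsub
    _ ≤ (μ.prod μ) T + (μ.prod μ) ((B ×ˢ B)ᶜ) := measure_union_le _ _
    _ = (μ.prod μ) T := by rw [hnull, add_zero]
    _ ≤ (ENNReal.ofReal Real.pi)⁻¹ * ENNReal.ofReal (16 * ε) *
        ((ENNReal.ofReal Real.pi)⁻¹ * ENNReal.ofReal (4 * Real.pi)) := by
        rw [hprod]
        exact le_trans (lintegral_mono hinner) hint
    _ ≤ ENNReal.ofReal (64 * ε) := by
        rw [← ENNReal.ofReal_inv_of_pos Real.pi_pos,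
          ← ENNReal.ofReal_mul (by positivity), ← ENNReal.ofReal_mul (by positivity),
          ← ENNReal.ofReal_mul (by positivity)]
        apply ENNReal.ofReal_le_ofReal
        have hπ3 : Real.pi > 3 := Real.pi_gt_three
        have hπinv : Real.pi⁻¹ * Real.pi = 1 := inv_mul_cancel₀ Real.pi_ne_zero
        have h1 : Real.pi⁻¹ ≤ 1 := by
          rw [inv_le_one_iff₀]; right; linarith
        have heq : Real.pi⁻¹ * (16 * ε) * (Real.pi⁻¹ * (4 * Real.pi)) = 64 * ε * Real.pi⁻¹ := by
          field_simp
          ring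
        rw [heq]
        calc 64 * ε * Real.pi⁻¹ ≤ 64 * ε * 1 :=
              mul_le_mul_of_nonneg_left h1 (by positivity)
          _ = 64 * ε := mul_one _
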